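/- (Theorem 1, incentive compatibility) Suppose the effort-cost and payment functions h, P : ℝ → ℝ → ℝ satisfy payment condition (4). Then truth-telling is weakly dominant: for all θ, θ̄, θ′, γ ∈ ℝ there exists γ′ ∈ ℝ such that the utility from the truthful report is at least the utility from the deviation, i.e. (if θ < θ̄ then P(θ̄, γ′) − h(θ, γ′) else 0) ≥ (if θ′ < θ̄ then P(θ̄, γ) − h(θ, γ) else 0). -/
import Mathlib

/-- Theorem 1 (incentive compatibility). If the effort-cost `h` and payment `P`
satisfy payment condition (4), then truth-telling is weakly dominant: for any
true misalignment `θ`, lowest competing bid `θ̄`, deviating report `θ'` and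
realization `γ`, there is a realization `γ'` under truthful reporting whose
utility is at least the deviation utility. -/
theorem truth_telling_weakly_dominant
    (h P : ℝ → ℝ → ℝ)
    (cond_a : ∀ θ θbar γ : ℝ, θ ≥ θbar → P θbar γ ≤ h θ γ)
    (cond_b : ∀ θ θbar : ℝ, θ < θbar → ∃ γ : ℝ, P θbar γ > h θ γ) :
    ∀ θ θbar θ' γ : ℝ, ∃ γ' : ℝ,
      (if θ < θbar then P θbar γ' - h θ γ' else 0) ≥
      (if θ' < θbar then P θbar γ - h θ γ else 0) := by
  intro θ θbar θ' γ
  by_cases hθ : θ < θbar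
  · by_cases hθ' : θ' < θbar
    · exact ⟨γ, by simp [hθ, hθ']⟩
    · obtain ⟨γ', hg⟩ := cond_b θ θbar hθ
      exact ⟨γ', by simp [hθ, hθ']; linarith⟩
  · refine ⟨γ, ?_⟩
    by_cases hθ' : θ' < θbar
    · have := cond_a θ θbar γ (le_of_not_gt hθ)
      simp [hθ, hθ']; linarith
    · simp [hθ, hθ']
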